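/- Let N ≥ 1. The number of functions μ from the edge set of the N-dimensional hypercube graph (vertex set 𝔽₂^N, with an edge between two vectors iff they differ in exactly one coordinate) to 𝔽₂ such that for every vector v ∈ 𝔽₂^N and all indices i ≠ j, the values of μ on the four edges of the square v, v+e_i, v+e_i+e_j, v+e_j sum to 1 in 𝔽₂, equals 2^{2^N − 1}. -/

import Mathlib

/-- The `N`-dimensional hypercube graph: vertices are vectors in `𝔽₂^N`, with an edge
between two vectors iff they differ in exactly one coordinate. -/
def hypercube (N : ℕ) : SimpleGraph (Fin N → ZMod 2) where
  Adj u v := hammingDist u v = 1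
  symm := by
    constructor
    intro u v h
    rwa [hammingDist_comm]
  loopless := by
    constructor
    intro u h
    simp [hammingDist_self] at h

namespace HCDash
open Finset

variable {N : ℕ}

lemma z2add : ∀ a : ZMod 2, a + a = 0 := by decide
lemma z2mul : ∀ a : ZMod 2, a * a = a := by decide
lemma z2one : ∀ a : ZMod 2, a ≠ 0 → a = 1 := by decide
lemma z2cases : ∀ a : ZMod 2, a = 0 ∨ a = 1 := by decide

lemma single_self (i : Fin N) :
    (Pi.single i 1 : Fin N → ZMod 2) + Pi.single i 1 = 0 := by
  funext l
  by_cases h : l = i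
  · simp only [Pi.add_apply, Pi.zero_apply, h, Pi.single_eq_same]; decide
  · simp [Pi.single_apply, h]

lemma addc (w : Fin N → ZMod 2) (i : Fin N) :
    w + Pi.single i 1 + Pi.single i 1 = w := by
  rw [add_assoc, single_self, add_zero]

lemma single_apply_ne {i l : Fin N} (h : l ≠ i) : (Pi.single i 1 : Fin N → ZMod 2) l = 0 :=
  Pi.single_eq_of_ne h 1

lemma hd_eq (u v : Fin N → ZMod 2) :
    hammingDist u v = (Finset.univ.filter fun k => u k ≠ v k).card := rfl

lemma hamming_single (u : Fin N → ZMod 2) (i : Fin N) :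
    hammingDist u (u + Pi.single i 1) = 1 := by
  rw [hd_eq]
  have h : (Finset.univ.filter fun k => u k ≠ (u + Pi.single i 1 : Fin N → ZMod 2) k) = {i} := by
    ext k
    simp only [mem_filter, mem_univ, true_and, mem_singleton, Pi.add_apply]
    by_cases h : k = i
    · subst h
      simp only [Pi.single_eq_same, iff_true]
      generalize u k = a; revert a; decide
    · simp [single_apply_ne h, h]
  rw [h, card_singleton]

lemma adj_iff {u v : Fin N → ZMod 2} :
    (hypercube N).Adj u v ↔ ∃ i, v = u + Pi.single i 1 := by
  constructor
  · intro h
    have h' : (Finset.univ.filter fun k => u k ≠ v k).card = 1 := h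
    obtain ⟨i, hi⟩ := Finset.card_eq_one.mp h'
    refine ⟨i, funext fun k => ?_⟩
    by_cases hk : k = i
    · subst hk
      have hne : u k ≠ v k := by
        have hm : k ∈ Finset.univ.filter fun l => u l ≠ v l := by
          rw [hi]; exact mem_singleton_self k
        exact (mem_filter.mp hm).2
      rw [Pi.add_apply, Pi.single_eq_same]
      revert hne; generalize u k = a; generalize v k = b; revert a b; decide
    · have hk2 : k ∉ Finset.univ.filter fun l => u l ≠ v l := by rw [hi]; simp [hk]
      simp only [mem_filter, mem_univ, true_and, not_not] at hk2
      rw [Pi.add_apply, single_apply_ne hk, add_zero, hk2]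
  · rintro ⟨i, rfl⟩; exact hamming_single u i

lemma edge_mem (u : Fin N → ZMod 2) (i : Fin N) :
    s(u, u + Pi.single i 1) ∈ (hypercube N).edgeSet :=
  (hypercube N).mem_edgeSet.mpr (hamming_single u i)

def Mm (i : Fin N) (u : Fin N → ZMod 2) : ZMod 2 := ∑ k ∈ Finset.Iio i, u k

def m0 (u v : Fin N → ZMod 2) : ZMod 2 :=
  ∑ i, (u i + v i) * ∑ k ∈ Finset.Iio i, u k * v k

lemma m0_comm (u v : Fin N → ZMod 2) : m0 u v = m0 v u := by
  unfold m0
  refine Finset.sum_congr rfl fun i _ => ?_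
  rw [add_comm (u i)]
  congr 1
  exact Finset.sum_congr rfl fun k _ => mul_comm _ _

lemma m0_edge (u : Fin N → ZMod 2) (i : Fin N) :
    m0 u (u + Pi.single i 1) = Mm i u := by
  unfold m0 Mm
  rw [Finset.sum_eq_single i]
  · simp only [Pi.add_apply, Pi.single_eq_same]
    have h1 : u i + (u i + 1) = 1 := by generalize u i = a; revert a; decide
    rw [h1, one_mul]
    refine Finset.sum_congr rfl fun k hk => ?_
    have hk' : k ≠ i := ne_of_lt (mem_Iio.mp hk)
    rw [single_apply_ne hk', add_zero, z2mul]
  · intro l _ hl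
    simp only [Pi.add_apply, single_apply_ne hl, add_zero, z2add, zero_mul]
  · intro h; exact absurd (mem_univ i) h

lemma Mm_add (i j : Fin N) (u : Fin N → ZMod 2) :
    Mm i (u + Pi.single j 1) = Mm i u + if j < i then 1 else 0 := by
  unfold Mm
  simp only [Pi.add_apply]
  rw [Finset.sum_add_distrib]
  congr 1
  have h : ∀ k ∈ Finset.Iio i, (Pi.single j 1 : Fin N → ZMod 2) k = if k = j then 1 else 0 :=
    fun k _ => Pi.single_apply j 1 k
  rw [Finset.sum_congr rfl h, Finset.sum_ite_eq' (Finset.Iio i) j]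
  simp [Finset.mem_Iio]


def pfx (k : Fin N) (u : Fin N → ZMod 2) : Fin N → ZMod 2 :=
  fun l => if l < k then u l else 0

lemma pfx_add_single_le {j k : Fin N} (u : Fin N → ZMod 2) (h : ¬ j < k) :
    pfx k (u + Pi.single j 1) = pfx k u := by
  funext l
  unfold pfx
  by_cases hl : l < k
  · have hlj : l ≠ j := fun e => h (e ▸ hl)
    simp [hl, Pi.add_apply, single_apply_ne hlj]
  · simp [hl]

lemma pfx_add_single_lt {j k : Fin N} (u : Fin N → ZMod 2) (h : j < k) :
    pfx k (u + Pi.single j 1) = pfx k u + Pi.single j 1 := by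
  funext l
  unfold pfx
  by_cases hl : l < k
  · simp [hl]
  · have hlj : l ≠ j := fun e => hl (e ▸ h)
    simp [hl, single_apply_ne hlj]

lemma pfx_eq_self {k : Fin N} {u : Fin N → ZMod 2} (h : ∀ l, k ≤ l → u l = 0) :
    pfx k u = u := by
  funext l
  unfold pfx
  by_cases hl : l < k
  · simp [hl]
  · simp only [hl, if_false]
    exact (h l (le_of_not_gt hl)).symm

lemma pfx_top {j : Fin N} {u : Fin N → ZMod 2} (hj : u j = 1) (h : ∀ l, j < l → u l = 0) :
    pfx j u = u + Pi.single j 1 := by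
  funext l
  unfold pfx
  rcases lt_trichotomy l j with hl | hl | hl
  · simp [hl, single_apply_ne (ne_of_lt hl)]
  · subst hl
    simp only [lt_irrefl, if_false, Pi.add_apply, Pi.single_eq_same, hj]
    decide
  · simp [not_lt_of_gt hl, h l hl, single_apply_ne (ne_of_gt hl)]

def nuval (μ : (hypercube N).edgeSet → ZMod 2) (u : Fin N → ZMod 2) (i : Fin N) : ZMod 2 :=
  μ ⟨s(u, u + Pi.single i 1), edge_mem u i⟩ + Mm i u

lemma mu_eq (μ : (hypercube N).edgeSet → ZMod 2) (u : Fin N → ZMod 2) (i : Fin N)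
    (h : s(u, u + Pi.single i 1) ∈ (hypercube N).edgeSet) :
    μ ⟨s(u, u + Pi.single i 1), h⟩ = nuval μ u i + Mm i u := by
  unfold nuval
  rw [add_assoc, z2add, add_zero]

lemma nuval_flip (μ : (hypercube N).edgeSet → ZMod 2) (u : Fin N → ZMod 2) (i : Fin N) :
    nuval μ (u + Pi.single i 1) i = nuval μ u i := by
  unfold nuval
  have h1 : (⟨s(u + Pi.single i 1, u + Pi.single i 1 + Pi.single i 1), edge_mem _ i⟩ :
      (hypercube N).edgeSet) = ⟨s(u, u + Pi.single i 1), edge_mem u i⟩ := by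
    apply Subtype.ext
    show s(u + Pi.single i 1, u + Pi.single i 1 + Pi.single i 1) = s(u, u + Pi.single i 1)
    simp only [addc]
    exact Sym2.eq_swap
  rw [h1, Mm_add]
  simp [lt_irrefl]

def gfun (μ : (hypercube N).edgeSet → ZMod 2) (u : Fin N → ZMod 2) : ZMod 2 :=
  ∑ k, u k * nuval μ (pfx k u) k


def Cond (μ : (hypercube N).edgeSet → ZMod 2) : Prop :=
  ∀ (v : Fin N → ZMod 2) (i j : Fin N), i ≠ j →
    ∀ (h1 : s(v, v + Pi.single i 1) ∈ (hypercube N).edgeSet)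
      (h2 : s(v + Pi.single i 1, v + Pi.single i 1 + Pi.single j 1) ∈
        (hypercube N).edgeSet)
      (h3 : s(v + Pi.single i 1 + Pi.single j 1, v + Pi.single j 1) ∈
        (hypercube N).edgeSet)
      (h4 : s(v + Pi.single j 1, v) ∈ (hypercube N).edgeSet),
      μ ⟨_, h1⟩ + μ ⟨_, h2⟩ + μ ⟨_, h3⟩ + μ ⟨_, h4⟩ = 1

lemma square (μ : (hypercube N).edgeSet → ZMod 2) (hc : Cond μ) (a : Fin N → ZMod 2)
    {i j : Fin N} (hij : i ≠ j) :
    nuval μ a i + nuval μ (a + Pi.single i 1) j + nuval μ (a + Pi.single j 1) i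
      + nuval μ a j = 0 := by
  have key3 : a + Pi.single i 1 + Pi.single j 1 + Pi.single i 1 = a + Pi.single j 1 := by
    rw [add_right_comm (a + Pi.single i 1) (Pi.single j 1) (Pi.single i 1), addc]
  have h3 : s(a + Pi.single i 1 + Pi.single j 1, a + Pi.single j 1) ∈ (hypercube N).edgeSet := by
    rw [← key3]; exact edge_mem _ i
  have h4 : s(a + Pi.single j 1, a) ∈ (hypercube N).edgeSet := by
    rw [Sym2.eq_swap]; exact edge_mem a j
  have hμ := hc a i j hij (edge_mem a i) (edge_mem (a + Pi.single i 1) j) h3 h4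
  have e3 : (⟨s(a + Pi.single i 1 + Pi.single j 1, a + Pi.single j 1), h3⟩ :
      (hypercube N).edgeSet) =
      ⟨s(a + Pi.single j 1, a + Pi.single j 1 + Pi.single i 1), edge_mem _ i⟩ := by
    apply Subtype.ext
    show s(a + Pi.single i 1 + Pi.single j 1, a + Pi.single j 1) =
      s(a + Pi.single j 1, a + Pi.single j 1 + Pi.single i 1)
    simp only [add_right_comm a (Pi.single i 1) (Pi.single j 1)]
    exact Sym2.eq_swap
  have e4 : (⟨s(a + Pi.single j 1, a), h4⟩ : (hypercube N).edgeSet) =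
      ⟨s(a, a + Pi.single j 1), edge_mem a j⟩ := by
    apply Subtype.ext
    exact Sym2.eq_swap
  rw [mu_eq μ a i, e3, e4, mu_eq μ (a + Pi.single i 1) j, mu_eq μ (a + Pi.single j 1) i,
    mu_eq μ a j, Mm_add j i a, Mm_add i j a] at hμ
  revert hμ
  generalize nuval μ a i = x1
  generalize nuval μ (a + Pi.single i 1) j = x2
  generalize nuval μ (a + Pi.single j 1) i = x3
  generalize nuval μ a j = x4
  generalize Mm i a = A
  generalize Mm j a = B
  rcases lt_or_gt_of_ne hij with h | h
  · rw [if_pos h, if_neg (lt_asymm h)]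
    revert x1 x2 x3 x4 A B; decide
  · rw [if_neg (lt_asymm h), if_pos h]
    revert x1 x2 x3 x4 A B; decide

lemma path_aux (μ : (hypercube N).edgeSet → ZMod 2) (hc : Cond μ) :
    ∀ (m : ℕ) (u : Fin N → ZMod 2) (i : Fin N), u i = 0 →
      ((Finset.Ioi i).filter (fun k => u k ≠ 0)).card = m →
      nuval μ u i + nuval μ (pfx i u) i =
        ∑ k ∈ Finset.Ioi i, u k *
          (nuval μ (pfx k u) k + nuval μ (pfx k u + Pi.single i 1) k) := by
  intro m
  induction m with
  | zero =>
    intro u i hui hcard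
    have hf : ∀ k, i < k → u k = 0 := by
      intro k hk
      by_contra hne
      have hm : k ∈ (Finset.Ioi i).filter (fun k => u k ≠ 0) :=
        mem_filter.mpr ⟨mem_Ioi.mpr hk, hne⟩
      rw [Finset.card_eq_zero.mp hcard] at hm
      exact absurd hm (Finset.notMem_empty k)
    have hpfx : pfx i u = u := pfx_eq_self (fun l hl => by
      rcases eq_or_lt_of_le hl with h | h
      · rw [← h]; exact hui
      · exact hf l h)
    rw [hpfx, z2add]
    symm
    exact Finset.sum_eq_zero fun k hk => by rw [hf k (mem_Ioi.mp hk), zero_mul]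
  | succ m ih =>
    intro u i hui hcard
    have hne : ((Finset.Ioi i).filter (fun k => u k ≠ 0)).Nonempty :=
      Finset.card_pos.mp (by rw [hcard]; exact Nat.succ_pos m)
    set j := ((Finset.Ioi i).filter (fun k => u k ≠ 0)).max' hne with hjdef
    have hjH : j ∈ (Finset.Ioi i).filter (fun k => u k ≠ 0) := Finset.max'_mem _ hne
    have hij : i < j := mem_Ioi.mp (mem_filter.mp hjH).1
    have huj : u j = 1 := z2one _ (mem_filter.mp hjH).2
    have hmax : ∀ k, j < k → u k = 0 := by
      intro k hk
      by_contra hne'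
      have hkH : k ∈ (Finset.Ioi i).filter (fun l => u l ≠ 0) :=
        mem_filter.mpr ⟨mem_Ioi.mpr (hij.trans hk), hne'⟩
      exact absurd (Finset.le_max' _ k hkH) (not_le_of_gt hk)
    have hu'i : ((u + Pi.single j 1 : Fin N → ZMod 2) i) = 0 := by
      rw [Pi.add_apply, single_apply_ne (ne_of_lt hij), add_zero]; exact hui
    have hu'k : ∀ k, k ≠ j → ((u + Pi.single j 1 : Fin N → ZMod 2) k) = u k := fun k hk => by
      rw [Pi.add_apply, single_apply_ne hk, add_zero]
    have hu'j : ((u + Pi.single j 1 : Fin N → ZMod 2) j) = 0 := by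
      rw [Pi.add_apply, Pi.single_eq_same, huj]; decide
    have hfilt : (Finset.Ioi i).filter (fun k => ((u + Pi.single j 1 : Fin N → ZMod 2) k) ≠ 0) =
        ((Finset.Ioi i).filter (fun k => u k ≠ 0)).erase j := by
      ext k
      simp only [mem_filter, mem_erase]
      constructor
      · rintro ⟨hk1, hk2⟩
        have hkj : k ≠ j := fun e => hk2 (e ▸ hu'j)
        exact ⟨hkj, hk1, by rwa [hu'k k hkj] at hk2⟩
      · rintro ⟨hkj, hk1, hk2⟩
        exact ⟨hk1, by rwa [hu'k k hkj]⟩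
    have hcard' : ((Finset.Ioi i).filter (fun k => ((u + Pi.single j 1 : Fin N → ZMod 2) k) ≠ 0)).card = m := by
      rw [hfilt, Finset.card_erase_of_mem hjH, hcard]
      rfl
    have IH := ih (u + Pi.single j 1) i hu'i hcard'
    have hpi : pfx i (u + Pi.single j 1) = pfx i u := pfx_add_single_le u (not_lt_of_gt hij)
    have hpj : pfx j u = u + Pi.single j 1 := pfx_top huj hmax
    have hsplit := Finset.add_sum_erase (Finset.Ioi i)
      (fun k => u k * (nuval μ (pfx k u) k + nuval μ (pfx k u + Pi.single i 1) k))
      (mem_Ioi.mpr hij)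
    have hsplit' := Finset.add_sum_erase (Finset.Ioi i)
      (fun k => ((u + Pi.single j 1 : Fin N → ZMod 2) k) *
        (nuval μ (pfx k (u + Pi.single j 1)) k
          + nuval μ (pfx k (u + Pi.single j 1) + Pi.single i 1) k))
      (mem_Ioi.mpr hij)
    beta_reduce at hsplit hsplit'
    have hterms : ∀ k ∈ (Finset.Ioi i).erase j,
        ((u + Pi.single j 1 : Fin N → ZMod 2) k) * (nuval μ (pfx k (u + Pi.single j 1)) k
          + nuval μ (pfx k (u + Pi.single j 1) + Pi.single i 1) k)
        = u k * (nuval μ (pfx k u) k + nuval μ (pfx k u + Pi.single i 1) k) := by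
      intro k hk
      obtain ⟨hkj, _⟩ := mem_erase.mp hk
      rcases lt_or_gt_of_ne hkj with h | h
      · rw [hu'k k hkj, pfx_add_single_le u (not_lt_of_gt h)]
      · rw [hu'k k hkj, hmax k h, zero_mul, zero_mul]
    have hzero : ((u + Pi.single j 1 : Fin N → ZMod 2) j) *
        (nuval μ (pfx j (u + Pi.single j 1)) j
          + nuval μ (pfx j (u + Pi.single j 1) + Pi.single i 1) j) = 0 := by
      rw [hu'j, zero_mul]
    -- ∑ over erase of u-version equals RHS of IH
    have herase : ∑ k ∈ (Finset.Ioi i).erase j,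
        u k * (nuval μ (pfx k u) k + nuval μ (pfx k u + Pi.single i 1) k)
        = nuval μ (u + Pi.single j 1) i + nuval μ (pfx i u) i := by
      rw [← Finset.sum_congr rfl hterms]
      have := hsplit'
      rw [hzero, zero_add] at this
      rw [this, ← IH, hpi]
    rw [← hsplit, herase]
    have hFj : u j * (nuval μ (pfx j u) j + nuval μ (pfx j u + Pi.single i 1) j)
        = nuval μ (u + Pi.single j 1) j + nuval μ (u + Pi.single j 1 + Pi.single i 1) j := by
      rw [huj, one_mul, hpj]
    rw [hFj]
    have hsq := square μ hc (u + Pi.single j 1) (ne_of_lt hij)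
    rw [addc u j] at hsq
    revert hsq
    generalize nuval μ (u + Pi.single j 1) i = x1
    generalize nuval μ (u + Pi.single j 1 + Pi.single i 1) j = x2
    generalize nuval μ u i = x3
    generalize nuval μ (u + Pi.single j 1) j = x4
    generalize nuval μ (pfx i u) i = P
    revert x1 x2 x3 x4 P; decide

lemma g_edge0 (μ : (hypercube N).edgeSet → ZMod 2) (hc : Cond μ) (u : Fin N → ZMod 2)
    (i : Fin N) (hui : u i = 0) :
    gfun μ (u + Pi.single i 1) + gfun μ u = nuval μ u i := by
  unfold gfun
  rw [← Finset.sum_add_distrib]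
  have hterm : ∀ k ∈ Finset.univ,
      ((u + Pi.single i 1 : Fin N → ZMod 2) k) * nuval μ (pfx k (u + Pi.single i 1)) k
        + u k * nuval μ (pfx k u) k
      = if k = i then nuval μ (pfx i u) i
        else if i < k then
          u k * (nuval μ (pfx k u) k + nuval μ (pfx k u + Pi.single i 1) k)
        else 0 := by
    intro k _
    by_cases hk : k = i
    · subst hk
      rw [if_pos rfl, pfx_add_single_le u (lt_irrefl k), Pi.add_apply, Pi.single_eq_same,
        hui, zero_add, one_mul, zero_mul, add_zero]
    · rw [if_neg hk]
      rcases lt_or_gt_of_ne hk with h | h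
      · rw [if_neg (lt_asymm h), pfx_add_single_le u (lt_asymm h), Pi.add_apply,
          single_apply_ne hk, add_zero, ← add_mul, z2add, zero_mul]
      · rw [if_pos h, pfx_add_single_lt u h, Pi.add_apply, single_apply_ne hk, add_zero,
          mul_add]
        ring
  rw [Finset.sum_congr rfl hterm, ← Finset.add_sum_erase _ _ (mem_univ i), if_pos rfl]
  have h2 : ∑ k ∈ Finset.univ.erase i,
      (if k = i then nuval μ (pfx i u) i
        else if i < k then
          u k * (nuval μ (pfx k u) k + nuval μ (pfx k u + Pi.single i 1) k)
        else 0)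
      = ∑ k ∈ Finset.Ioi i,
          u k * (nuval μ (pfx k u) k + nuval μ (pfx k u + Pi.single i 1) k) := by
    rw [Finset.sum_congr rfl (fun k hk => if_neg (mem_erase.mp hk).1),
      ← Finset.sum_filter]
    congr 1
    ext k
    simp only [mem_filter, mem_erase, mem_univ, mem_Ioi, true_and, and_true]
    constructor
    · rintro ⟨_, hk⟩; exact hk
    · intro hk; exact ⟨ne_of_gt hk, hk⟩
  rw [h2, ← path_aux μ hc _ u i hui rfl]
  generalize nuval μ u i = A
  generalize nuval μ (pfx i u) i = B
  revert A B; decide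

lemma g_edge (μ : (hypercube N).edgeSet → ZMod 2) (hc : Cond μ) (u : Fin N → ZMod 2)
    (i : Fin N) :
    gfun μ u + gfun μ (u + Pi.single i 1) = nuval μ u i := by
  rcases z2cases (u i) with h | h
  · rw [add_comm]; exact g_edge0 μ hc u i h
  · have h' : ((u + Pi.single i 1 : Fin N → ZMod 2) i) = 0 := by
      rw [Pi.add_apply, Pi.single_eq_same, h]; decide
    have hg := g_edge0 μ hc (u + Pi.single i 1) i h'
    rw [addc] at hg
    rw [← nuval_flip μ u i]
    exact hg

def lab (f : (Fin N → ZMod 2) → ZMod 2) : Sym2 (Fin N → ZMod 2) → ZMod 2 :=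
  Sym2.lift ⟨fun u v => m0 u v + f u + f v, by
    intro u v
    show m0 u v + f u + f v = m0 v u + f v + f u
    rw [m0_comm]
    ring⟩

lemma lab_mk (f : (Fin N → ZMod 2) → ZMod 2) (u v : Fin N → ZMod 2) :
    lab f s(u, v) = m0 u v + f u + f v := rfl

lemma lab_cond (f : (Fin N → ZMod 2) → ZMod 2) :
    Cond (N := N) (fun e => lab f e.1) := by
  intro v i j hij h1 h2 h3 h4
  show lab f s(v, v + Pi.single i 1)
      + lab f s(v + Pi.single i 1, v + Pi.single i 1 + Pi.single j 1)
      + lab f s(v + Pi.single i 1 + Pi.single j 1, v + Pi.single j 1)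
      + lab f s(v + Pi.single j 1, v) = 1
  have key3 : v + Pi.single i 1 + Pi.single j 1 + Pi.single i 1 = v + Pi.single j 1 := by
    rw [add_right_comm (v + Pi.single i 1) (Pi.single j 1) (Pi.single i 1), addc]
  have m3 : m0 (v + Pi.single i 1 + Pi.single j 1) (v + Pi.single j 1)
      = Mm i (v + Pi.single i 1 + Pi.single j 1) := by
    conv_lhs => rw [← key3]
    exact m0_edge _ i
  have m4 : m0 (v + Pi.single j 1) v = Mm j v := by
    rw [m0_comm]; exact m0_edge v j
  rw [lab_mk, lab_mk, lab_mk, lab_mk, m0_edge v i, m0_edge (v + Pi.single i 1) j, m3, m4,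
    Mm_add j i v, Mm_add i j (v + Pi.single i 1), Mm_add i i v, if_neg (lt_irrefl i), add_zero]
  generalize f v = a1
  generalize f (v + Pi.single i 1) = a2
  generalize f (v + Pi.single i 1 + Pi.single j 1) = a3
  generalize f (v + Pi.single j 1) = a4
  generalize Mm i v = A
  generalize Mm j v = B
  rcases lt_or_gt_of_ne hij with h | h
  · rw [if_pos h, if_neg (lt_asymm h)]
    revert a1 a2 a3 a4 A B; decide
  · rw [if_neg (lt_asymm h), if_pos h]
    revert a1 a2 a3 a4 A B; decide

lemma lab_g (μ : (hypercube N).edgeSet → ZMod 2) (hc : Cond μ)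
    (e : Sym2 (Fin N → ZMod 2)) (he : e ∈ (hypercube N).edgeSet) :
    lab (gfun μ) e = μ ⟨e, he⟩ := by
  revert he
  induction e using Sym2.ind with
  | _ a b =>
    intro he
    obtain ⟨i, rfl⟩ := adj_iff.mp ((hypercube N).mem_edgeSet.mp he)
    rw [lab_mk, m0_edge, add_assoc, g_edge μ hc a i]
    have hrfl : (⟨s(a, a + Pi.single i 1), edge_mem a i⟩ : (hypercube N).edgeSet)
        = ⟨s(a, a + Pi.single i 1), he⟩ := rfl
    unfold nuval
    rw [hrfl]
    generalize μ ⟨s(a, a + Pi.single i 1), he⟩ = X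
    generalize Mm i a = A
    revert X A; decide

lemma filter_univ_step {u : Fin N → ZMod 2} {j : Fin N} (hj : u j ≠ 0) :
    Finset.univ.filter (fun k => ((u + Pi.single j 1 : Fin N → ZMod 2) k) ≠ 0) =
      (Finset.univ.filter (fun k => u k ≠ 0)).erase j := by
  have huj : u j = 1 := z2one _ hj
  have hu'j : ((u + Pi.single j 1 : Fin N → ZMod 2) j) = 0 := by
    rw [Pi.add_apply, Pi.single_eq_same, huj]; decide
  have hu'k : ∀ k, k ≠ j → ((u + Pi.single j 1 : Fin N → ZMod 2) k) = u k := fun k hk => by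
    rw [Pi.add_apply, single_apply_ne hk, add_zero]
  ext k
  simp only [mem_filter, mem_erase, mem_univ, true_and]
  constructor
  · intro hk2
    have hkj : k ≠ j := fun e => hk2 (e ▸ hu'j)
    exact ⟨hkj, by rwa [hu'k k hkj] at hk2⟩
  · rintro ⟨hkj, hk2⟩
    rwa [hu'k k hkj]

lemma eq_of_edges (d : (Fin N → ZMod 2) → ZMod 2) (h0 : d 0 = 0)
    (h : ∀ (u : Fin N → ZMod 2) (i : Fin N), d (u + Pi.single i 1) = d u) :
    ∀ u, d u = 0 := by
  suffices H : ∀ (m : ℕ) (u : Fin N → ZMod 2),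
      (Finset.univ.filter (fun k => u k ≠ 0)).card = m → d u = 0 by
    intro u; exact H _ u rfl
  intro m
  induction m with
  | zero =>
    intro u hc
    have hu : u = 0 := by
      funext k
      by_contra hk
      have hm : k ∈ Finset.univ.filter (fun l => u l ≠ 0) :=
        mem_filter.mpr ⟨mem_univ k, hk⟩
      rw [Finset.card_eq_zero.mp hc] at hm
      exact absurd hm (Finset.notMem_empty k)
    rw [hu]; exact h0
  | succ m ih =>
    intro u hc
    have hne : (Finset.univ.filter (fun k => u k ≠ 0)).Nonempty :=
      Finset.card_pos.mp (by rw [hc]; exact Nat.succ_pos m)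
    obtain ⟨j, hj⟩ := hne
    have hj' : u j ≠ 0 := (mem_filter.mp hj).2
    have step : d u = d (u + Pi.single j 1) := by
      conv_lhs => rw [← addc u j]
      exact h (u + Pi.single j 1) j
    rw [step]
    apply ih
    rw [filter_univ_step hj', Finset.card_erase_of_mem hj, hc]
    rfl

lemma count_f : Nat.card {f : (Fin N → ZMod 2) → ZMod 2 // f 0 = 0} = 2 ^ (2 ^ N - 1) := by
  classical
  have E : {f : (Fin N → ZMod 2) → ZMod 2 // f 0 = 0} ≃
      ({x : Fin N → ZMod 2 // x ≠ 0} → ZMod 2) :=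
    { toFun := fun f x => f.1 x.1
      invFun := fun g => ⟨fun v => if h : v = 0 then 0 else g ⟨v, h⟩, by simp⟩
      left_inv := by
        rintro ⟨f, hf⟩
        apply Subtype.ext
        funext v
        dsimp
        by_cases h : v = 0
        · rw [if_pos h, h, hf]
        · rw [if_neg h]
      right_inv := by
        intro g
        funext x
        dsimp
        rw [dif_neg x.2] }
  rw [Nat.card_congr E, Nat.card_eq_fintype_card, Fintype.card_fun]
  have h1 : Fintype.card {x : Fin N → ZMod 2 // x ≠ 0} = 2 ^ N - 1 := by
    have h2 : Fintype.card (Fin N → ZMod 2) = 2 ^ N := by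
      rw [Fintype.card_fun]
      simp
    simp [Fintype.card_subtype_compl, h2]
  rw [h1]
  simp

lemma main_count : Nat.card {μ : (hypercube N).edgeSet → ZMod 2 // Cond μ}
    = 2 ^ (2 ^ N - 1) := by
  classical
  have hbij : Function.Bijective
      (fun f : {f : (Fin N → ZMod 2) → ZMod 2 // f 0 = 0} =>
        (⟨fun e => lab f.1 e.1, lab_cond f.1⟩ :
          {μ : (hypercube N).edgeSet → ZMod 2 // Cond μ})) := by
    constructor
    · rintro ⟨f, hf⟩ ⟨g, hg⟩ hfg
      have hall : ∀ e : (hypercube N).edgeSet, lab f e.1 = lab g e.1 := fun e =>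
        congrFun (congrArg Subtype.val hfg) e
      apply Subtype.ext
      have hd : ∀ u, f u + g u = 0 := by
        apply eq_of_edges
        · show f 0 + g 0 = 0
          rw [hf, hg, add_zero]
        · intro u i
          have h1 := hall ⟨s(u, u + Pi.single i 1), edge_mem u i⟩
          rw [lab_mk, lab_mk] at h1
          show f (u + Pi.single i 1) + g (u + Pi.single i 1) = f u + g u
          revert h1
          generalize m0 u (u + Pi.single i 1) = A
          generalize f u = a1
          generalize f (u + Pi.single i 1) = a2
          generalize g u = a3
          generalize g (u + Pi.single i 1) = a4
          revert A a1 a2 a3 a4; decide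
      funext u
      show f u = g u
      have h2 := hd u
      revert h2
      generalize f u = a
      generalize g u = b
      revert a b; decide
    · rintro ⟨μ, hμ⟩
      refine ⟨⟨gfun μ, ?_⟩, ?_⟩
      · apply Finset.sum_eq_zero
        intro k _
        rw [Pi.zero_apply, zero_mul]
      · apply Subtype.ext
        funext e
        exact lab_g μ hμ e.1 e.2
  rw [← Nat.card_eq_of_bijective _ hbij, count_f]

end HCDash

/-- The number of `𝔽₂`-labelings of the edges of the `N`-dimensional hypercube graph
such that the four edges of every square `v, v+eᵢ, v+eᵢ+eⱼ, v+eⱼ` (`i ≠ j`) carry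
labels summing to `1` equals `2^(2^N - 1)`. -/
theorem hypercube_dashing_count (N : ℕ) (hN : 1 ≤ N) :
    Nat.card {μ : (hypercube N).edgeSet → ZMod 2 //
      ∀ (v : Fin N → ZMod 2) (i j : Fin N), i ≠ j →
        ∀ (h1 : s(v, v + Pi.single i 1) ∈ (hypercube N).edgeSet)
          (h2 : s(v + Pi.single i 1, v + Pi.single i 1 + Pi.single j 1) ∈
            (hypercube N).edgeSet)
          (h3 : s(v + Pi.single i 1 + Pi.single j 1, v + Pi.single j 1) ∈
            (hypercube N).edgeSet)
          (h4 : s(v + Pi.single j 1, v) ∈ (hypercube N).edgeSet),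
          μ ⟨_, h1⟩ + μ ⟨_, h2⟩ + μ ⟨_, h3⟩ + μ ⟨_, h4⟩ = 1} =
    2 ^ (2 ^ N - 1) := by
  show Nat.card {μ : (hypercube N).edgeSet → ZMod 2 // HCDash.Cond μ} = 2 ^ (2 ^ N - 1)
  exact HCDash.main_count
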